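/- Let (γ, z) ↦ φ_γ(z) be a family of functions φ_γ : [0,∞) → ℝ, each differentiable, let p, q be probability densities with ‖p‖_{1+γ}, ‖q‖_{1+γ} ∈ (0,∞) and ⟨q p^γ⟩ < ∞ for all sufficiently small γ > 0, with ⟨q log p⟩, ⟨q log q⟩ and ⟨p log p⟩ finite, and let c ∈ ℝ. Assume: (i) lim_{γ→0⁺} (⟨q p^γ⟩ − 1)/γ = ⟨q log p⟩; (ii) lim_{γ→0⁺} (⟨p^{1+γ}⟩ − 1)/γ = ⟨p log p⟩ and lim_{γ→0⁺} (⟨q^{1+γ}⟩ − 1)/γ = ⟨q log q⟩; (iii) lim_{γ→0⁺} ‖p‖_{1+γ}^γ = 1 and lim_{γ→0⁺} ‖q‖_{1+γ}^γ = 1; (iv) lim_{γ→0⁺} φ_γ'(‖p‖_{1+γ}) = φ_0'(1) and lim_{γ→0⁺} φ_γ'(‖q‖_{1+γ}) = φ_0'(1); (v) lim_{γ→0⁺} (φ_γ(‖p‖_{1+γ}) − φ_0(1))/γ = φ_0'(1)·⟨p log p⟩ + c and lim_{γ→0⁺} (φ_γ(‖q‖_{1+γ}) − φ_0(1))/γ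 = φ_0'(1)·⟨q log q⟩ + c. Then the norm-based Bregman density power divergence satisfies lim_{γ→0⁺} D^{NB}_{φ,γ}(q,p) = φ_0'(1)·⟨q log(q/p)⟩, i.e., it converges to a constant multiple of the Kullback–Leibler divergence. -/

import Mathlib

open MeasureTheory Filter Real Topology Set

/-- A probability density w.r.t. a measure `ν`: measurable, nonnegative, integrating to 1. -/
def IsProbDensity {X : Type*} [MeasurableSpace X] (ν : Measure X) (p : X → ℝ) : Prop :=
  Measurable p ∧ (∀ x, 0 ≤ p x) ∧ ∫ x, p x ∂ν = 1

/-- `⟨f^{1+γ}⟩ = ∫ f(x)^{1+γ} dν`. -/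
noncomputable def powInt {X : Type*} [MeasurableSpace X] (ν : Measure X) (γ : ℝ) (p : X → ℝ) : ℝ :=
  ∫ x, p x ^ (1 + γ) ∂ν

/-- `⟨q p^γ⟩ = ∫ q(x) p(x)^γ dν`. -/
noncomputable def crossInt {X : Type*} [MeasurableSpace X] (ν : Measure X) (γ : ℝ)
    (q p : X → ℝ) : ℝ :=
  ∫ x, q x * p x ^ γ ∂ν

/-- `‖f‖_{1+γ} = ⟨f^{1+γ}⟩^{1/(1+γ)}`. -/
noncomputable def lnorm {X : Type*} [MeasurableSpace X] (ν : Measure X) (γ : ℝ) (p : X → ℝ) : ℝ :=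
  (powInt ν γ p) ^ (1 / (1 + γ))

/-- The norm-based Bregman density power divergence (NB-DPD), for `γ > 0`:
`D^{NB}_{φ,γ}(q,p) = (φ_γ(‖q‖) − φ_γ(‖p‖))/γ − φ_γ'(‖p‖)(⟨q p^γ⟩ − ⟨p^{1+γ}⟩)/(γ‖p‖^γ)`. -/
noncomputable def DNB {X : Type*} [MeasurableSpace X] (ν : Measure X) (φ : ℝ → ℝ → ℝ) (γ : ℝ)
    (q p : X → ℝ) : ℝ :=
  (φ γ (lnorm ν γ q) - φ γ (lnorm ν γ p)) / γ -
    deriv (φ γ) (lnorm ν γ p) * (crossInt ν γ q p - powInt ν γ p) / (γ * lnorm ν γ p ^ γ)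

lemma rpow_sub_one_div_le {t : ℝ} (ht : 0 ≤ t) {a b : ℝ} (ha : 0 < a) (hab : a ≤ b) :
    (t ^ a - 1) / a ≤ (t ^ b - 1) / b := by
  have hb : 0 < b := ha.trans_le hab
  rcases ht.eq_or_lt with h0 | h0
  · rw [← h0, Real.zero_rpow ha.ne', Real.zero_rpow hb.ne', div_le_div_iff₀ ha hb]
    nlinarith
  · have hu : 0 < t ^ a := Real.rpow_pos_of_pos h0 a
    have hr : 1 ≤ b / a := (one_le_div ha).2 hab
    have hber := one_add_mul_self_le_rpow_one_add (s := t ^ a - 1) (by linarith) hr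
    have htb : (1 + (t ^ a - 1)) ^ (b / a) = t ^ b := by
      rw [show 1 + (t ^ a - 1) = t ^ a by ring, ← Real.rpow_mul h0.le]
      congr 1
      field_simp
    rw [htb] at hber
    rw [div_le_div_iff₀ ha hb]
    have hba : b / a * a = b := by field_simp
    nlinarith [mul_le_mul_of_nonneg_right hber ha.le]

/-- as `γ → 0⁺`, the NB-DPD converges to a constant multiple of the
Kullback–Leibler divergence: `lim_{γ→0⁺} D^{NB}_{φ,γ}(q,p) = φ_0'(1)·⟨q log (q/p)⟩`. -/
theorem nbdpd_tendsto_kl {X : Type*} [MeasurableSpace X] (ν : Measure X) [SigmaFinite ν]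
    (φ : ℝ → ℝ → ℝ) (hφdiff : ∀ γ : ℝ, Differentiable ℝ (φ γ))
    (p q : X → ℝ) (hp : IsProbDensity ν p) (hq : IsProbDensity ν q)
    (c : ℝ)
    (hfin : ∀ᶠ γ in 𝓝[>] (0:ℝ), 0 < powInt ν γ p ∧ 0 < powInt ν γ q ∧
      Integrable (fun x => p x ^ (1 + γ)) ν ∧ Integrable (fun x => q x ^ (1 + γ)) ν ∧
      Integrable (fun x => q x * p x ^ γ) ν)
    (hqlogp : Integrable (fun x => q x * Real.log (p x)) ν)
    (hqlogq : Integrable (fun x => q x * Real.log (q x)) ν)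
    (hplogp : Integrable (fun x => p x * Real.log (p x)) ν)
    (h1 : Tendsto (fun γ => (crossInt ν γ q p - 1) / γ) (𝓝[>] (0:ℝ))
      (𝓝 (∫ x, q x * Real.log (p x) ∂ν)))
    (h2p : Tendsto (fun γ => (powInt ν γ p - 1) / γ) (𝓝[>] (0:ℝ))
      (𝓝 (∫ x, p x * Real.log (p x) ∂ν)))
    (h2q : Tendsto (fun γ => (powInt ν γ q - 1) / γ) (𝓝[>] (0:ℝ))
      (𝓝 (∫ x, q x * Real.log (q x) ∂ν)))
    (h3p : Tendsto (fun γ => lnorm ν γ p ^ γ) (𝓝[>] (0:ℝ)) (𝓝 1))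
    (h3q : Tendsto (fun γ => lnorm ν γ q ^ γ) (𝓝[>] (0:ℝ)) (𝓝 1))
    (h4p : Tendsto (fun γ => deriv (φ γ) (lnorm ν γ p)) (𝓝[>] (0:ℝ)) (𝓝 (deriv (φ 0) 1)))
    (h4q : Tendsto (fun γ => deriv (φ γ) (lnorm ν γ q)) (𝓝[>] (0:ℝ)) (𝓝 (deriv (φ 0) 1)))
    (h5p : Tendsto (fun γ => (φ γ (lnorm ν γ p) - φ 0 1) / γ) (𝓝[>] (0:ℝ))
      (𝓝 (deriv (φ 0) 1 * (∫ x, p x * Real.log (p x) ∂ν) + c)))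
    (h5q : Tendsto (fun γ => (φ γ (lnorm ν γ q) - φ 0 1) / γ) (𝓝[>] (0:ℝ))
      (𝓝 (deriv (φ 0) 1 * (∫ x, q x * Real.log (q x) ∂ν) + c))) :
    Tendsto (fun γ => DNB ν φ γ q p) (𝓝[>] (0:ℝ))
      (𝓝 (deriv (φ 0) 1 * ∫ x, q x * Real.log (q x / p x) ∂ν)) := by
  obtain ⟨hpm, hp0, hpint1⟩ := hp
  obtain ⟨hqm, hq0, hqint1⟩ := hq
  have hqi : Integrable q ν := by
    by_contra h
    rw [integral_undef h] at hqint1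
    norm_num at hqint1
  -- the bad set
  set A : Set X := {x | p x = 0 ∧ 0 < q x} with hAdef
  have hAm : MeasurableSet A := by
    have : A = (p ⁻¹' {0}) ∩ {x | 0 < q x} := rfl
    rw [this]
    exact (hpm (measurableSet_singleton 0)).inter (measurableSet_lt measurable_const hqm)
  -- pick γ0
  obtain ⟨γ0, hγ0, hIoc⟩ := mem_nhdsGT_iff_exists_Ioc_subset.mp hfin
  rw [mem_Ioi] at hγ0
  obtain ⟨-, -, -, -, hcross0⟩ := hIoc (right_mem_Ioc.mpr hγ0)
  -- bound function
  set B : X → ℝ := fun x => q x * max ((p x ^ γ0 - 1) / γ0) 0 with hBdef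
  have hBnn : ∀ x, 0 ≤ B x := fun x => mul_nonneg (hq0 x) (le_max_right _ _)
  have hBi : Integrable B ν := by
    refine Integrable.mono' (hcross0.div_const γ0) ?_ ?_
    · exact (hqm.mul ((((hpm.pow_const γ0).sub measurable_const).div_const γ0).max
        measurable_const)).aestronglyMeasurable
    · filter_upwards with x
      rw [Real.norm_of_nonneg (hBnn x)]
      have hnn : 0 ≤ p x ^ γ0 := Real.rpow_nonneg (hp0 x) γ0
      have h1' : max ((p x ^ γ0 - 1) / γ0) 0 ≤ p x ^ γ0 / γ0 := by
        apply max_le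
        · gcongr
          linarith
        · positivity
      calc B x ≤ q x * (p x ^ γ0 / γ0) := mul_le_mul_of_nonneg_left h1' (hq0 x)
        _ = q x * p x ^ γ0 / γ0 := by ring
  set C : ℝ := ∫ x, B x ∂ν with hCdef
  set ε : ℝ := ∫ x in A, q x ∂ν with hεdef
  have hεnn : 0 ≤ ε := setIntegral_nonneg hAm fun x _ => hq0 x
  -- key eventual inequality
  have hkey : ∀ᶠ γ in 𝓝[>] (0:ℝ), ε ≤ γ * (C - (crossInt ν γ q p - 1) / γ) := by
    have hmem : Ioc (0:ℝ) γ0 ∈ 𝓝[>] (0:ℝ) := Ioc_mem_nhdsGT_of_mem (by simp [hγ0])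
    filter_upwards [hmem] with γ hγmem
    obtain ⟨hγ, hγle⟩ := hγmem
    obtain ⟨-, -, -, -, hcrossγ⟩ := hIoc ⟨hγ, hγle⟩
    have hsub : Integrable (fun x => q x * p x ^ γ - q x) ν := hcrossγ.sub hqi
    have hdiff : crossInt ν γ q p - 1 = ∫ x, (q x * p x ^ γ - q x) ∂ν := by
      rw [integral_sub hcrossγ hqi, crossInt, hqint1]
    rw [← integral_add_compl hAm hsub] at hdiff
    have hA1 : ∫ x in A, (q x * p x ^ γ - q x) ∂ν = -ε := by
      have heq : ∀ x ∈ A, q x * p x ^ γ - q x = -q x := by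
        intro x hx
        rw [hx.1, Real.zero_rpow hγ.ne']
        ring
      rw [setIntegral_congr_fun hAm heq, integral_neg, hεdef]
    have hAc : ∫ x in Aᶜ, (q x * p x ^ γ - q x) ∂ν ≤ γ * C := by
      have hpt : ∀ x, q x * p x ^ γ - q x ≤ γ * B x := by
        intro x
        have hm := (rpow_sub_one_div_le (hp0 x) hγ hγle).trans (le_max_left _ 0)
        have h2' : q x * p x ^ γ - q x = γ * (q x * ((p x ^ γ - 1) / γ)) := by
          field_simp
        rw [h2']
        exact mul_le_mul_of_nonneg_left (mul_le_mul_of_nonneg_left hm (hq0 x)) hγ.le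
      calc ∫ x in Aᶜ, (q x * p x ^ γ - q x) ∂ν
          ≤ ∫ x in Aᶜ, γ * B x ∂ν := by
            exact setIntegral_mono_on hsub.integrableOn (hBi.const_mul γ).integrableOn
              hAm.compl (fun x _ => hpt x)
        _ ≤ ∫ x, γ * B x ∂ν :=
            setIntegral_le_integral (hBi.const_mul γ)
              (Eventually.of_forall fun x => mul_nonneg hγ.le (hBnn x))
        _ = γ * C := by rw [integral_const_mul]
    have hγne : γ ≠ 0 := hγ.ne'
    have hexp : γ * (C - (crossInt ν γ q p - 1) / γ) = γ * C - (crossInt ν γ q p - 1) := by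
      field_simp
    rw [hexp]
    linarith [hdiff, hA1, hAc]
  have htend0 : Tendsto (fun γ : ℝ => γ * (C - (crossInt ν γ q p - 1) / γ)) (𝓝[>] (0:ℝ))
      (𝓝 0) := by
    have h := Tendsto.mul (tendsto_id.mono_left nhdsWithin_le_nhds)
      ((tendsto_const_nhds (x := C)).sub h1)
    simpa using h
  have hε0 : ε = 0 := le_antisymm (ge_of_tendsto htend0 hkey) hεnn
  -- a.e. statement
  have hAae : ∀ᵐ x ∂ν, x ∉ A := by
    have hq0' : (0:X → ℝ) ≤ q := hq0
    have hz : q =ᵐ[ν.restrict A] 0 :=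
      (integral_eq_zero_iff_of_nonneg hq0' hqi.restrict).mp hε0
    have hz' := (ae_restrict_iff' hAm).mp hz
    filter_upwards [hz'] with x hx hxA
    exact hxA.2.ne' (hx hxA)
  -- KL integral split
  have hKL : ∫ x, q x * Real.log (q x / p x) ∂ν
      = (∫ x, q x * Real.log (q x) ∂ν) - ∫ x, q x * Real.log (p x) ∂ν := by
    rw [← integral_sub hqlogq hqlogp]
    refine integral_congr_ae ?_
    filter_upwards [hAae] with x hx
    rcases (hq0 x).eq_or_lt with hq' | hq'
    · simp [← hq']
    · have hp' : p x ≠ 0 := fun h => hx ⟨h, hq'⟩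
      rw [Real.log_div hq'.ne' hp']
      ring
  -- eventual rewrite of DNB
  have heq : ∀ᶠ γ in 𝓝[>] (0:ℝ),
      ((φ γ (lnorm ν γ q) - φ 0 1) / γ - (φ γ (lnorm ν γ p) - φ 0 1) / γ) -
        deriv (φ γ) (lnorm ν γ p) *
          (((crossInt ν γ q p - 1) / γ - (powInt ν γ p - 1) / γ) / (lnorm ν γ p ^ γ))
      = DNB ν φ γ q p := by
    filter_upwards [hfin, self_mem_nhdsWithin] with γ hγP hγ
    rw [mem_Ioi] at hγ
    have hpw : 0 < powInt ν γ p := hγP.1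
    have hl : 0 < lnorm ν γ p := Real.rpow_pos_of_pos hpw _
    have hN : lnorm ν γ p ^ γ ≠ 0 := (Real.rpow_pos_of_pos hl γ).ne'
    rw [DNB]
    field_simp
    ring
  have hmain : Tendsto (fun γ =>
      ((φ γ (lnorm ν γ q) - φ 0 1) / γ - (φ γ (lnorm ν γ p) - φ 0 1) / γ) -
        deriv (φ γ) (lnorm ν γ p) *
          (((crossInt ν γ q p - 1) / γ - (powInt ν γ p - 1) / γ) / (lnorm ν γ p ^ γ)))
      (𝓝[>] (0:ℝ))
      (𝓝 (((deriv (φ 0) 1 * (∫ x, q x * Real.log (q x) ∂ν) + c) -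
            (deriv (φ 0) 1 * (∫ x, p x * Real.log (p x) ∂ν) + c)) -
          deriv (φ 0) 1 *
            (((∫ x, q x * Real.log (p x) ∂ν) - ∫ x, p x * Real.log (p x) ∂ν) / 1))) :=
    (h5q.sub h5p).sub (h4p.mul ((h1.sub h2p).div h3p one_ne_zero))
  have hval : deriv (φ 0) 1 * ∫ x, q x * Real.log (q x / p x) ∂ν =
      ((deriv (φ 0) 1 * (∫ x, q x * Real.log (q x) ∂ν) + c) -
        (deriv (φ 0) 1 * (∫ x, p x * Real.log (p x) ∂ν) + c)) -
      deriv (φ 0) 1 *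
        (((∫ x, q x * Real.log (p x) ∂ν) - ∫ x, p x * Real.log (p x) ∂ν) / 1) := by
    rw [hKL]
    ring
  rw [hval]
  exact hmain.congr' heq
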